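/- arXiv:2109.05185 — 2 statements merged into one kernel-verified Lean document; each statement's English description precedes it below -/
import Mathlib

section
/- Let φ : ℝ → ℝ be a bounded nonnegative measurable function with vanishing mean value, i.e. lim_{L→∞} (1/(2L)) ∫_{-L}^L φ(t) dt = 0, and let k : (0,∞) → [0,∞) with ∫₀^∞ k(s) ds ≤ L̃ < ∞. Then the function ψ(t) = ∫₀^{∞} k(ξ) φ(t-ξ) dξ also has vanishing mean value: lim_{L→∞} (1/(2L)) ∫_{-L}^L ψ(t) dt = 0. -/
open MeasureTheory Set Filter

-- helper: composing an integrable function with snd on a product with finite first measure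
lemma integrable_comp_snd {f : ℝ → ℝ} {μ ν : Measure ℝ} [IsFiniteMeasure μ] [SigmaFinite ν]
    (hf : Integrable f ν) :
    Integrable (fun p : ℝ × ℝ => f p.2) (μ.prod ν) := by
  have h1 : Integrable f ((μ.prod ν).map Prod.snd) := by
    rw [Measure.map_snd_prod]
    exact hf.smul_measure (measure_ne_top μ _)
  exact (integrable_map_measure h1.aestronglyMeasurable measurable_snd.aemeasurable).mp h1

/-- Convolution of a bounded nonnegative function `φ` with vanishing
Cesàro mean against a nonnegative integrable kernel `k` again has vanishing mean. -/
theorem stmt5 (φ k : ℝ → ℝ) (hφm : Measurable φ) (hφ0 : ∀ t, 0 ≤ φ t)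
    (M : ℝ) (hφb : ∀ t, φ t ≤ M)
    (hφmean : Tendsto (fun L : ℝ => (1 / (2 * L)) * ∫ t in (-L)..L, φ t)
      atTop (nhds 0))
    (hk0 : ∀ s, 0 ≤ k s) (hkm : Measurable k)
    (hkint : IntegrableOn k (Ioi (0 : ℝ))) (L' : ℝ)
    (hkL : (∫ s in Ioi (0 : ℝ), k s) ≤ L') :
    Tendsto
      (fun L : ℝ => (1 / (2 * L)) * ∫ t in (-L)..L, ∫ ξ in Ioi (0 : ℝ), k ξ * φ (t - ξ))
      atTop (nhds 0) := by
  have hM : 0 ≤ M := (hφ0 0).trans (hφb 0)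
  -- φ is integrable on every interval
  have hφint : ∀ a b : ℝ, IntervalIntegrable φ volume a b := by
    intro a b
    constructor <;>
    · refine Integrable.mono' (integrable_const M) hφm.aestronglyMeasurable ?_
      filter_upwards with t
      rw [Real.norm_eq_abs, abs_of_nonneg (hφ0 t)]
      exact hφb t
  have hφintξ : ∀ (ξ a b : ℝ), IntervalIntegrable (fun t => φ (t - ξ)) volume a b := by
    intro ξ a b
    have := hφint (a - ξ) (b - ξ)
    have h2 := this.comp_sub_right ξ
    simpa using h2
  -- the inner interval-integral is nonneg and bounded
  have hI0 : ∀ (L ξ : ℝ), 0 < L → 0 ≤ ∫ t in (-L)..L, φ (t - ξ) := by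
    intro L ξ hL
    apply intervalIntegral.integral_nonneg (by linarith)
    intro t _; exact hφ0 _
  have hIle : ∀ (L ξ : ℝ), 0 < L → (∫ t in (-L)..L, φ (t - ξ)) ≤ 2 * L * M := by
    intro L ξ hL
    have : (∫ t in (-L)..L, φ (t - ξ)) ≤ ∫ t in (-L)..L, M := by
      apply intervalIntegral.integral_mono_on (by linarith) (hφintξ ξ _ _)
        intervalIntegrable_const
      intro t _; exact hφb _
    simpa using this.trans (by simp [intervalIntegral.integral_const]; ring_nf; rfl)
  -- the function we will apply dominated convergence to
  set G : ℝ → ℝ → ℝ := fun L ξ => (1 / (2 * L)) * (k ξ * ∫ t in (-L)..L, φ (t - ξ)) with hG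
  have key : Tendsto (fun L => ∫ ξ in Ioi (0:ℝ), G L ξ) atTop (nhds 0) := by
    have h := tendsto_integral_filter_of_dominated_convergence
      (μ := volume.restrict (Ioi (0:ℝ))) (F := G) (f := fun _ => (0:ℝ)) (l := atTop)
      (fun ξ => M * k ξ) ?_ ?_ ?_ ?_
    · simpa using h
    · -- eventual measurability
      filter_upwards [eventually_gt_atTop (0:ℝ)] with L hL
      have hsm : StronglyMeasurable fun ξ => ∫ t in Ioc (-L) L, φ (t - ξ) := by
        apply MeasureTheory.StronglyMeasurable.integral_prod_right
          (f := fun ξ t => φ (t - ξ)) (ν := volume.restrict (Ioc (-L) L))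
        exact (hφm.comp (measurable_snd.sub measurable_fst)).stronglyMeasurable
      have : StronglyMeasurable (G L) := by
        have : G L = fun ξ => (1 / (2 * L)) * (k ξ * ∫ t in Ioc (-L) L, φ (t - ξ)) := by
          funext ξ
          rw [hG]
          simp only []
          rw [intervalIntegral.integral_of_le (by linarith)]
        rw [this]
        exact (stronglyMeasurable_const.mul (hkm.stronglyMeasurable.mul hsm))
      exact this.aestronglyMeasurable
    · -- bound
      filter_upwards [eventually_gt_atTop (0:ℝ)] with L hL
      filter_upwards with ξ
      have h1 := hI0 L ξ hL
      have h2 := hIle L ξ hL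
      have hGnn : 0 ≤ G L ξ := by
        apply mul_nonneg (by positivity)
        exact mul_nonneg (hk0 ξ) h1
      rw [Real.norm_eq_abs, abs_of_nonneg hGnn, hG]
      simp only []
      have : k ξ * (∫ t in (-L)..L, φ (t - ξ)) ≤ k ξ * (2 * L * M) :=
        mul_le_mul_of_nonneg_left h2 (hk0 ξ)
      calc (1 / (2 * L)) * (k ξ * ∫ t in (-L)..L, φ (t - ξ))
          ≤ (1 / (2 * L)) * (k ξ * (2 * L * M)) := by
            apply mul_le_mul_of_nonneg_left this (by positivity)
        _ = M * k ξ := by field_simp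
    · exact hkint.const_mul M
    · -- pointwise limit
      rw [ae_restrict_iff' measurableSet_Ioi]
      filter_upwards with ξ hξ
      have hξ0 : (0:ℝ) < ξ := hξ
      -- A L = (1/(2L)) ∫_{-L}^{L} φ(t-ξ) dt → 0
      have hA : Tendsto (fun L => (1 / (2 * L)) * ∫ t in (-L)..L, φ (t - ξ)) atTop (nhds 0) := by
        -- upper bound B L
        have hB : Tendsto (fun L => ((L + ξ) / L) * ((1 / (2 * (L + ξ))) * ∫ t in (-(L+ξ))..(L+ξ), φ t)) atTop (nhds 0) := by
          have h1 : Tendsto (fun L : ℝ => (L + ξ) / L) atTop (nhds 1) := by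
            have : (fun L : ℝ => (L + ξ) / L) =ᶠ[atTop] fun L => 1 + ξ / L := by
              filter_upwards [eventually_gt_atTop (0:ℝ)] with L hL
              field_simp
            rw [tendsto_congr' this]
            have := (tendsto_const_nhds (x := ξ) (f := atTop)).div_atTop tendsto_id
            simpa using (tendsto_const_nhds (x := (1:ℝ))).add this
          have h2 : Tendsto (fun L : ℝ => (1 / (2 * (L + ξ))) * ∫ t in (-(L+ξ))..(L+ξ), φ t) atTop (nhds 0) := by
            have h := hφmean.comp (tendsto_atTop_add_const_right atTop ξ tendsto_id)
            simpa only [Function.comp_def, id_eq] using h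
          simpa using h1.mul h2
        apply tendsto_of_tendsto_of_tendsto_of_le_of_le' tendsto_const_nhds hB
        · filter_upwards [eventually_gt_atTop (0:ℝ)] with L hL
          exact mul_nonneg (by positivity) (hI0 L ξ hL)
        · filter_upwards [eventually_gt_atTop (0:ℝ)] with L hL
          have hLξ : (0:ℝ) < L + ξ := by linarith
          have heq : (∫ t in (-L)..L, φ (t - ξ)) = ∫ t in (-L - ξ)..(L - ξ), φ t := by
            rw [intervalIntegral.integral_comp_sub_right]
          have hmono : (∫ t in (-L - ξ)..(L - ξ), φ t) ≤ ∫ t in (-(L+ξ))..(L+ξ), φ t := by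
            apply intervalIntegral.integral_mono_interval (by linarith) (by linarith) (by linarith)
            · filter_upwards with t; exact hφ0 t
            · exact hφint _ _
          calc (1 / (2 * L)) * ∫ t in (-L)..L, φ (t - ξ)
              ≤ (1 / (2 * L)) * ∫ t in (-(L+ξ))..(L+ξ), φ t := by
                rw [heq]
                exact mul_le_mul_of_nonneg_left hmono (by positivity)
            _ = ((L + ξ) / L) * ((1 / (2 * (L + ξ))) * ∫ t in (-(L+ξ))..(L+ξ), φ t) := by
                field_simp
      have : (fun L => G L ξ) = fun L => k ξ * ((1 / (2 * L)) * ∫ t in (-L)..L, φ (t - ξ)) := by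
        funext L; rw [hG]; ring
      rw [this]
      simpa using (tendsto_const_nhds (x := k ξ)).mul hA
  -- identify the two functions eventually
  apply key.congr'
  filter_upwards [eventually_gt_atTop (0:ℝ)] with L hL
  have hprodint : Integrable (fun p : ℝ × ℝ => k p.2 * φ (p.1 - p.2))
      ((volume.restrict (Ioc (-L) L)).prod (volume.restrict (Ioi (0:ℝ)))) := by
    apply Integrable.mono' (g := fun p : ℝ × ℝ => M * k p.2)
    · haveI : IsFiniteMeasure (volume.restrict (Ioc (-L) L)) :=
        ⟨by simp [Real.volume_Ioc]⟩
      exact integrable_comp_snd (μ := volume.restrict (Ioc (-L) L)) (hkint.const_mul M)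
    · exact ((hkm.comp measurable_snd).mul
        (hφm.comp (measurable_fst.sub measurable_snd))).aestronglyMeasurable
    · filter_upwards with p
      rw [Real.norm_eq_abs, abs_of_nonneg (mul_nonneg (hk0 _) (hφ0 _))]
      calc k p.2 * φ (p.1 - p.2) ≤ k p.2 * M :=
            mul_le_mul_of_nonneg_left (hφb _) (hk0 _)
        _ = M * k p.2 := mul_comm _ _
  have swap : (∫ t in Ioc (-L) L, ∫ ξ in Ioi (0:ℝ), k ξ * φ (t - ξ))
      = ∫ ξ in Ioi (0:ℝ), ∫ t in Ioc (-L) L, k ξ * φ (t - ξ) := by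
    exact MeasureTheory.integral_integral_swap (f := fun t ξ => k ξ * φ (t - ξ)) hprodint
  calc ∫ ξ in Ioi (0:ℝ), G L ξ
      = (1 / (2 * L)) * ∫ ξ in Ioi (0:ℝ), k ξ * ∫ t in (-L)..L, φ (t - ξ) := by
        rw [← integral_const_mul]
    _ = (1 / (2 * L)) * ∫ t in (-L)..L, ∫ ξ in Ioi (0:ℝ), k ξ * φ (t - ξ) := by
        congr 1
        rw [intervalIntegral.integral_of_le (by linarith : -L ≤ L), swap]
        apply setIntegral_congr_fun measurableSet_Ioi
        intro ξ _
        dsimp only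
        rw [intervalIntegral.integral_of_le (by linarith : -L ≤ L), ← integral_const_mul]
end

section
/- Let X be a Banach space. If g ∈ AP(ℝ,X) is almost periodic and φ ∈ PAP₀(ℝ,X) has vanishing mean value, then sup_{t∈ℝ} ‖g(t)‖ ≤ sup_{t∈ℝ} ‖g(t)+φ(t)‖. Consequently the decomposition of a pseudo almost periodic function f = g + φ is unique. -/
open Set Filter

/-- Bohr almost periodic function. -/
def IsBohrAP {X : Type*} [NormedAddCommGroup X] (g : ℝ → X) : Prop :=
  Continuous g ∧ ∀ ε > (0 : ℝ), ∃ l > (0 : ℝ), ∀ a : ℝ, ∃ T ∈ Icc a (a + l),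
    ∀ t : ℝ, ‖g (t + T) - g t‖ < ε

/-- Bounded continuous function with vanishing Cesàro mean of the norm. -/
def IsPAP0Fun {X : Type*} [NormedAddCommGroup X] (φ : ℝ → X) : Prop :=
  Continuous φ ∧ (∃ M, ∀ t, ‖φ t‖ ≤ M) ∧
    Tendsto (fun L : ℝ => (1 / (2 * L)) * ∫ t in (-L)..L, ‖φ t‖) atTop (nhds 0)

section aux
variable {X : Type*} [NormedAddCommGroup X]

lemma ap_bounded {g : ℝ → X} (hg : IsBohrAP g) : ∃ C, ∀ t, ‖g t‖ ≤ C := by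
  obtain ⟨hc, hb⟩ := hg
  obtain ⟨l, hl, hT⟩ := hb 1 one_pos
  obtain ⟨C, hC⟩ := (isCompact_Icc (a := (0:ℝ)) (b := l)).exists_bound_of_continuousOn
    hc.continuousOn
  refine ⟨C + 1, fun t => ?_⟩
  obtain ⟨T, hTm, hTap⟩ := hT (-t)
  have h1 : ‖g (t + T) - g t‖ < 1 := hTap t
  have h2 : ‖g (t + T)‖ ≤ C := hC (t + T) ⟨by linarith [hTm.1], by linarith [hTm.2]⟩
  have := abs_norm_sub_norm_le (g (t + T)) (g t)
  have := abs_le.1 this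
  linarith [this.1]

lemma ap_uc {g : ℝ → X} (hg : IsBohrAP g) : UniformContinuous g := by
  obtain ⟨hc, hb⟩ := hg
  rw [Metric.uniformContinuous_iff]
  intro ε hε
  obtain ⟨l, hl, hT⟩ := hb (ε/3) (by positivity)
  have hucon : UniformContinuousOn g (Icc (-1) (l+1)) :=
    isCompact_Icc.uniformContinuousOn_of_continuous hc.continuousOn
  rw [Metric.uniformContinuousOn_iff] at hucon
  obtain ⟨δ, hδ0, hδ⟩ := hucon (ε/3) (by positivity)
  refine ⟨min δ 1, by positivity, fun a b hab => ?_⟩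
  obtain ⟨T, hTm, hTap⟩ := hT (-a)
  have hab1 : dist a b < 1 := lt_of_lt_of_le hab (min_le_right _ _)
  have habδ : dist a b < δ := lt_of_lt_of_le hab (min_le_left _ _)
  have haT : a + T ∈ Icc (-1 : ℝ) (l+1) := ⟨by linarith [hTm.1], by linarith [hTm.2]⟩
  have hbT : b + T ∈ Icc (-1 : ℝ) (l+1) := by
    have hd : -(1:ℝ) < a - b ∧ a - b < 1 := abs_lt.1 (by rwa [Real.dist_eq] at hab1)
    exact ⟨by linarith [hTm.1, hd.2], by linarith [hTm.2, hd.1]⟩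
  have hmid : dist (g (a+T)) (g (b+T)) < ε/3 := by
    refine hδ _ haT _ hbT ?_
    rw [Real.dist_eq]
    have : a + T - (b + T) = a - b := by ring
    rw [this, ← Real.dist_eq]; exact habδ
  have h1 : dist (g a) (g (a+T)) < ε/3 := by
    rw [dist_eq_norm, ← norm_neg]; simpa [neg_sub] using hTap a
  have h3 : dist (g (b+T)) (g b) < ε/3 := by
    rw [dist_eq_norm]; simpa using hTap b
  calc dist (g a) (g b) ≤ dist (g a) (g (a+T)) + dist (g (a+T)) (g (b+T)) + dist (g (b+T)) (g b) :=
        dist_triangle4 _ _ _ _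
    _ < ε/3 + ε/3 + ε/3 := by linarith
    _ = ε := by ring

lemma ap_net {g : ℝ → X} (hg : IsBohrAP g) {ε : ℝ} (hε : 0 < ε) :
    ∃ (n : ℕ) (a : ℕ → ℝ), ∀ s : ℝ, ∃ i, i ≤ n ∧ ∀ t, ‖g (t+s) - g (t + a i)‖ ≤ ε := by
  obtain ⟨l, hl, hT⟩ := hg.2 (ε/2) (by positivity)
  obtain ⟨δ, hδ0, hδ⟩ := Metric.uniformContinuous_iff.1 (ap_uc hg) (ε/2) (by positivity)
  refine ⟨⌈l/δ⌉₊, fun i => i * δ, fun s => ?_⟩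
  obtain ⟨T, hTm, hTap⟩ := hT (-s)
  set s' := s + T with hs'
  have hs'0 : 0 ≤ s' := by simp only [hs']; linarith [hTm.1]
  have hs'l : s' ≤ l := by simp only [hs']; linarith [hTm.2]
  refine ⟨⌊s'/δ⌋₊, ?_, fun t => ?_⟩
  · exact le_trans (Nat.floor_le_floor (by gcongr)) (Nat.floor_le_ceil _)
  · have hfl : (⌊s'/δ⌋₊ : ℝ) * δ ≤ s' := by
      have := Nat.floor_le (by positivity : (0:ℝ) ≤ s'/δ)
      calc (⌊s'/δ⌋₊ : ℝ) * δ ≤ (s'/δ) * δ := by nlinarith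
        _ = s' := by field_simp
    have hfl2 : s' < (⌊s'/δ⌋₊ + 1 : ℝ) * δ := by
      have := Nat.lt_floor_add_one (s'/δ)
      calc s' = (s'/δ) * δ := by field_simp
        _ < (⌊s'/δ⌋₊ + 1 : ℝ) * δ := by nlinarith
    have h1 : ‖g (t + s) - g (t + s')‖ < ε/2 := by
      have := hTap (t + s)
      have he : t + s + T = t + s' := by simp [hs']; ring
      rw [he] at this
      rw [← norm_neg]; simpa [neg_sub] using this
    have h2 : ‖g (t + s') - g (t + ⌊s'/δ⌋₊ * δ)‖ < ε/2 := by
      have hd : dist (t + s') (t + ⌊s'/δ⌋₊ * δ) < δ := by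
        rw [Real.dist_eq]
        have : t + s' - (t + ⌊s'/δ⌋₊ * δ) = s' - ⌊s'/δ⌋₊ * δ := by ring
        rw [this, abs_of_nonneg (by linarith)]
        nlinarith
      have := hδ hd
      rwa [dist_eq_norm] at this
    calc ‖g (t+s) - g (t + ⌊s'/δ⌋₊ * δ)‖
        ≤ ‖g (t+s) - g (t+s')‖ + ‖g (t+s') - g (t + ⌊s'/δ⌋₊ * δ)‖ := norm_sub_le_norm_sub_add_norm_sub _ _ _
      _ ≤ ε := by linarith

end aux

section aux2
variable {X : Type*} [NormedAddCommGroup X]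

lemma ap_common {g g₂ : ℝ → X} (hg : IsBohrAP g) (hg₂ : IsBohrAP g₂) {ε : ℝ} (hε : 0 < ε) :
    ∃ l > (0:ℝ), ∀ α : ℝ, ∃ T ∈ Icc α (α + l),
      ∀ t, ‖g (t+T) - g t‖ ≤ ε ∧ ‖g₂ (t+T) - g₂ t‖ ≤ ε := by
  classical
  obtain ⟨n, a, ha⟩ := ap_net hg (by positivity : (0:ℝ) < ε/2)
  obtain ⟨m, b, hb⟩ := ap_net hg₂ (by positivity : (0:ℝ) < ε/2)
  -- color function
  let c₁ : ℝ → ℕ := fun s => (ha s).choose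
  let c₂ : ℝ → ℕ := fun s => (hb s).choose
  have hc₁ : ∀ s, c₁ s ≤ n ∧ ∀ t, ‖g (t+s) - g (t + a (c₁ s))‖ ≤ ε/2 := fun s => (ha s).choose_spec
  have hc₂ : ∀ s, c₂ s ≤ m ∧ ∀ t, ‖g₂ (t+s) - g₂ (t + b (c₂ s))‖ ≤ ε/2 := fun s => (hb s).choose_spec
  let rep : ℕ × ℕ → ℝ := fun p => if h : ∃ s, (c₁ s, c₂ s) = p then h.choose else 0
  -- bound on representatives
  set F : Finset (ℕ × ℕ) := Finset.range (n+1) ×ˢ Finset.range (m+1) with hF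
  have hFne : F.Nonempty := ⟨(0,0), by simp [hF]⟩
  set L : ℝ := F.sup' hFne (fun p => |rep p|) with hL
  have hLb : ∀ p ∈ F, |rep p| ≤ L := fun p hp => Finset.le_sup' (fun q => |rep q|) hp
  have hL0 : 0 ≤ L := le_trans (abs_nonneg _) (hLb (0,0) (by simp [hF]))
  refine ⟨2*L + 1, by linarith, fun α => ?_⟩
  set s : ℝ := α + L + 1/2 with hs
  set p : ℕ × ℕ := (c₁ s, c₂ s) with hp
  have hex : ∃ s', (c₁ s', c₂ s') = p := ⟨s, rfl⟩
  set r : ℝ := rep p with hr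
  have hrsp : (c₁ hex.choose, c₂ hex.choose) = p := hex.choose_spec
  have hrdef : r = hex.choose := by simp only [hr, rep, dif_pos hex]
  have hpF : p ∈ F := by
    simp only [hF, Finset.mem_product, Finset.mem_range]
    exact ⟨Nat.lt_succ_of_le (hc₁ s).1, Nat.lt_succ_of_le (hc₂ s).1⟩
  have hrL : |r| ≤ L := hLb p hpF
  refine ⟨s - r, ?_, fun t => ?_⟩
  · have := abs_le.1 hrL
    constructor <;> [skip; skip] <;> simp only [hs] <;> linarith [this.1, this.2]
  · have h1 : ∀ u, ‖g (u + s) - g (u + r)‖ ≤ ε := by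
      intro u
      have e1 := (hc₁ s).2 u
      have e2 := (hc₁ hex.choose).2 u
      have hcc : c₁ hex.choose = c₁ s := by
        have := congrArg Prod.fst hrsp; simpa [hp] using this
      rw [hcc, ← hrdef] at e2
      calc ‖g (u + s) - g (u + r)‖
          ≤ ‖g (u+s) - g (u + a (c₁ s))‖ + ‖g (u + r) - g (u + a (c₁ s))‖ := by
            rw [norm_sub_rev (g (u + r))]; exact norm_sub_le_norm_sub_add_norm_sub _ _ _
        _ ≤ ε/2 + ε/2 := add_le_add e1 e2
        _ = ε := by ring
    have h2 : ∀ u, ‖g₂ (u + s) - g₂ (u + r)‖ ≤ ε := by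
      intro u
      have e1 := (hc₂ s).2 u
      have e2 := (hc₂ hex.choose).2 u
      have hcc : c₂ hex.choose = c₂ s := by
        have := congrArg Prod.snd hrsp; simpa [hp] using this
      rw [hcc, ← hrdef] at e2
      calc ‖g₂ (u + s) - g₂ (u + r)‖
          ≤ ‖g₂ (u+s) - g₂ (u + b (c₂ s))‖ + ‖g₂ (u + r) - g₂ (u + b (c₂ s))‖ := by
            rw [norm_sub_rev (g₂ (u + r))]; exact norm_sub_le_norm_sub_add_norm_sub _ _ _
        _ ≤ ε/2 + ε/2 := add_le_add e1 e2
        _ = ε := by ring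
    constructor
    · have := h1 (t - r)
      have e : t - r + s = t + (s - r) := by ring
      have e' : t - r + r = t := by ring
      rwa [e, e'] at this
    · have := h2 (t - r)
      have e : t - r + s = t + (s - r) := by ring
      have e' : t - r + r = t := by ring
      rwa [e, e'] at this

lemma ap_sub {g g₂ : ℝ → X} (hg : IsBohrAP g) (hg₂ : IsBohrAP g₂) :
    IsBohrAP (fun t => g t - g₂ t) := by
  refine ⟨hg.1.sub hg₂.1, fun ε hε => ?_⟩
  obtain ⟨l, hl, hc⟩ := ap_common hg hg₂ (by positivity : (0:ℝ) < ε/3)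
  refine ⟨l, hl, fun α => ?_⟩
  obtain ⟨T, hTm, hTap⟩ := hc α
  refine ⟨T, hTm, fun t => ?_⟩
  obtain ⟨h1, h2⟩ := hTap t
  have : g (t+T) - g₂ (t+T) - (g t - g₂ t) = (g (t+T) - g t) - (g₂ (t+T) - g₂ t) := by abel
  calc ‖g (t+T) - g₂ (t+T) - (g t - g₂ t)‖ = ‖(g (t+T) - g t) - (g₂ (t+T) - g₂ t)‖ := by rw [this]
    _ ≤ ‖g (t+T) - g t‖ + ‖g₂ (t+T) - g₂ t‖ := norm_sub_le _ _
    _ ≤ ε/3 + ε/3 := add_le_add h1 h2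
    _ < ε := by linarith

lemma pap0_sub {φ φ₂ : ℝ → X} (hφ : IsPAP0Fun φ) (hφ₂ : IsPAP0Fun φ₂) :
    IsPAP0Fun (fun t => φ t - φ₂ t) := by
  obtain ⟨hc, ⟨M, hM⟩, hm⟩ := hφ
  obtain ⟨hc₂, ⟨M₂, hM₂⟩, hm₂⟩ := hφ₂
  refine ⟨hc.sub hc₂, ⟨M + M₂, fun t => (norm_sub_le _ _).trans (add_le_add (hM t) (hM₂ t))⟩, ?_⟩
  have hsum : Tendsto (fun L : ℝ => ((1 / (2 * L)) * ∫ t in (-L)..L, ‖φ t‖)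
      + (1 / (2 * L)) * ∫ t in (-L)..L, ‖φ₂ t‖) atTop (nhds 0) := by
    have h := hm.add hm₂; simpa only [add_zero] using h
  refine squeeze_zero' ?_ ?_ hsum
  · filter_upwards [eventually_ge_atTop (0:ℝ)] with L hL
    have : -L ≤ L := by linarith
    exact mul_nonneg (by positivity) (intervalIntegral.integral_nonneg this (fun x _ => norm_nonneg _))
  · filter_upwards [eventually_ge_atTop (0:ℝ)] with L hL
    have hLL : -L ≤ L := by linarith
    have hint : ∫ t in (-L)..L, ‖φ t - φ₂ t‖ ≤ (∫ t in (-L)..L, ‖φ t‖) + ∫ t in (-L)..L, ‖φ₂ t‖ := by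
      rw [← intervalIntegral.integral_add (hc.norm.intervalIntegrable _ _) (hc₂.norm.intervalIntegrable _ _)]
      exact intervalIntegral.integral_mono_on hLL ((hc.sub hc₂).norm.intervalIntegrable _ _)
        ((hc.norm.add hc₂.norm).intervalIntegrable _ _) (fun x _ => norm_sub_le _ _)
    calc (1 / (2*L)) * ∫ t in (-L)..L, ‖φ t - φ₂ t‖
        ≤ (1 / (2*L)) * ((∫ t in (-L)..L, ‖φ t‖) + ∫ t in (-L)..L, ‖φ₂ t‖) := by
          apply mul_le_mul_of_nonneg_left hint (by positivity)
      _ = ((1 / (2*L)) * ∫ t in (-L)..L, ‖φ t‖) + (1 / (2*L)) * ∫ t in (-L)..L, ‖φ₂ t‖ :=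
            mul_add _ _ _

lemma key_lemma {g φ : ℝ → X} (hg : IsBohrAP g) (hφ : IsPAP0Fun φ) (t₀ : ℝ) :
    ‖g t₀‖ ≤ ⨆ t, ‖g t + φ t‖ := by
  obtain ⟨Cg, hCg⟩ := ap_bounded hg
  obtain ⟨hφc, ⟨Mφ, hMφ⟩, hmean⟩ := hφ
  have hbdd : BddAbove (Set.range fun t => ‖g t + φ t‖) := by
    refine ⟨Cg + Mφ, ?_⟩
    rintro x ⟨t, rfl⟩
    exact (norm_add_le _ _).trans (add_le_add (hCg t) (hMφ t))
  by_contra hlt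
  push_neg at hlt
  set S := ⨆ t, ‖g t + φ t‖ with hS
  set ε := ‖g t₀‖ - S with hεdef
  have hε0 : 0 < ε := by simp only [hεdef]; linarith
  obtain ⟨l, hl, hT⟩ := hg.2 (ε/4) (by positivity)
  obtain ⟨δ, hδ0, hδ⟩ := Metric.uniformContinuous_iff.1 (ap_uc hg) (ε/4) (by positivity)
  set p : ℝ := l + δ with hpdef
  have hp0 : 0 < p := by positivity
  -- pointwise lower bound on ‖φ‖ near almost periods
  have claim : ∀ T : ℝ, (∀ t, ‖g (t + T) - g t‖ < ε/4) → ∀ s : ℝ, |s - T| ≤ δ/2 →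
      ε/2 ≤ ‖φ (t₀ + s)‖ := by
    intro T hTap s hsT
    have h1 : ‖g (t₀ + s) - g (t₀ + T)‖ < ε/4 := by
      have hd : dist (t₀ + s) (t₀ + T) < δ := by
        rw [Real.dist_eq]
        have : t₀ + s - (t₀ + T) = s - T := by ring
        rw [this]; linarith [hsT]
      have := hδ hd
      rwa [dist_eq_norm] at this
    have h2 : ‖g (t₀ + T) - g t₀‖ < ε/4 := hTap t₀
    have h3 : ‖g t₀‖ - ε/2 ≤ ‖g (t₀ + s)‖ := by
      have htri : ‖g t₀‖ - ‖g (t₀ + s)‖ ≤ ‖g (t₀ + s) - g t₀‖ := by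
        rw [norm_sub_rev]; exact norm_sub_norm_le _ _
      have : ‖g (t₀ + s) - g t₀‖ ≤ ‖g (t₀+s) - g (t₀+T)‖ + ‖g (t₀+T) - g t₀‖ :=
        norm_sub_le_norm_sub_add_norm_sub _ _ _
      linarith
    have h4 : ‖g (t₀ + s) + φ (t₀ + s)‖ ≤ S := le_ciSup hbdd (t₀ + s)
    have h5 : ‖g (t₀ + s)‖ - ‖g (t₀+s) + φ (t₀+s)‖ ≤ ‖φ (t₀ + s)‖ := by
      have := norm_sub_norm_le (g (t₀+s)) (g (t₀+s) + φ (t₀+s))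
      simpa using this
    simp only [hεdef] at *
    linarith
  -- block integral lower bound
  set c : ℝ := (δ/2) * (ε/2) with hcdef
  have hc0 : 0 < c := by positivity
  have hFi : ∀ a b : ℝ, IntervalIntegrable (fun x => ‖φ x‖) MeasureTheory.volume a b :=
    fun a b => hφc.norm.intervalIntegrable a b
  have hblock : ∀ n : ℕ, (n : ℝ) * c ≤ ∫ x in t₀..(t₀ + n * p), ‖φ x‖ := by
    intro n
    induction n with
    | zero => simp
    | succ n ih =>
      obtain ⟨T, hTm, hTap⟩ := hT (n * p)
      have hone : c ≤ ∫ x in (t₀ + n*p)..(t₀ + (n+1)*p), ‖φ x‖ := by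
        have hsub : (δ/2) * (ε/2) ≤ ∫ x in (t₀ + T)..(t₀ + T + δ/2), ‖φ x‖ := by
          have hconst : ∫ x in (t₀ + T)..(t₀ + T + δ/2), (ε/2 : ℝ) = (δ/2) * (ε/2) := by
            rw [intervalIntegral.integral_const, smul_eq_mul]; ring_nf
          rw [← hconst]
          refine intervalIntegral.integral_mono_on (by linarith) (by
            exact intervalIntegrable_const) (hFi _ _) ?_
          intro x hx
          have hx1 := hx.1
          have hx2 := hx.2
          have : ε/2 ≤ ‖φ (t₀ + (x - t₀))‖ := by
            refine claim T hTap (x - t₀) ?_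
            rw [abs_le]; constructor <;> linarith
          simpa using this
        refine le_trans hsub (intervalIntegral.integral_mono_interval ?_ ?_ ?_ ?_ (hFi _ _))
        · linarith [hTm.1]
        · linarith
        · have h2 := hTm.2
          simp only [hpdef] at h2 ⊢
          ring_nf
          ring_nf at h2
          linarith [hδ0]
        · exact Filter.Eventually.of_forall (fun x => norm_nonneg _)
      have hadd := intervalIntegral.integral_add_adjacent_intervals
        (hFi t₀ (t₀ + n*p)) (hFi (t₀ + n*p) (t₀ + (n+1)*p))
      push_cast
      calc ((n:ℝ) + 1) * c = (n:ℝ) * c + c := by ring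
        _ ≤ (∫ x in t₀..(t₀ + n*p), ‖φ x‖) + ∫ x in (t₀ + n*p)..(t₀ + (n+1)*p), ‖φ x‖ :=
            add_le_add ih hone
        _ = ∫ x in t₀..(t₀ + ((n:ℝ)+1) * p), ‖φ x‖ := hadd
  -- contradiction with the mean
  set η : ℝ := c / (4 * p) with hηdef
  have hη0 : 0 < η := by positivity
  obtain ⟨L₀, hL₀⟩ := (Metric.tendsto_atTop.1 hmean) η hη0
  obtain ⟨n, hn⟩ := exists_nat_ge ((max L₀ (|t₀| + p)) / p)
  have hnp : (n:ℝ) * p ≥ max L₀ (|t₀| + p) := by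
    rw [ge_iff_le, ← div_le_iff₀ hp0]; exact hn
  have hnp1 : (n:ℝ) * p ≥ L₀ := le_trans (le_max_left _ _) hnp
  have hnp2 : (n:ℝ) * p ≥ |t₀| + p := le_trans (le_max_right _ _) hnp
  set M : ℝ := |t₀| + n * p with hM
  have hM0 : 0 < M := by simp only [hM]; linarith [abs_nonneg t₀, hnp2, hp0]
  have hML₀ : M ≥ L₀ := by simp only [hM]; linarith [abs_nonneg t₀]
  have hint2 : (n:ℝ) * c ≤ ∫ x in (-M)..M, ‖φ x‖ := by
    refine le_trans (hblock n) (intervalIntegral.integral_mono_interval ?_ ?_ ?_ ?_ (hFi _ _))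
    · simp only [hM]; linarith [neg_abs_le t₀, hnp2, hp0]
    · linarith [hnp2, hp0, abs_nonneg t₀]
    · simp only [hM]; linarith [le_abs_self t₀]
    · exact Filter.Eventually.of_forall (fun x => norm_nonneg _)
  have hval := hL₀ M hML₀
  rw [Real.dist_eq, sub_zero] at hval
  have hval' : (1 / (2*M)) * ∫ x in (-M)..M, ‖φ x‖ < η := lt_of_le_of_lt (le_abs_self _) hval
  have hge : η ≤ (1 / (2*M)) * ∫ x in (-M)..M, ‖φ x‖ := by
    have h1 : (1 / (2*M)) * ((n:ℝ) * c) ≤ (1 / (2*M)) * ∫ x in (-M)..M, ‖φ x‖ :=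
      mul_le_mul_of_nonneg_left hint2 (by positivity)
    refine le_trans ?_ h1
    have h2M : 2 * M ≤ 4 * ((n:ℝ) * p) := by
      simp only [hM]; linarith [hnp2, hp0]
    have hkey : c / (4*p) ≤ ((n:ℝ) * c) / (2*M) := by
      rw [div_le_div_iff₀ (by positivity) (by linarith [hM0])]
      nlinarith [mul_le_mul_of_nonneg_left h2M hc0.le]
    calc η = c / (4*p) := hηdef
      _ ≤ ((n:ℝ)*c)/(2*M) := hkey
      _ = (1/(2*M)) * ((n:ℝ)*c) := by ring
  linarith

end aux2

/-- If `g ∈ AP` and `φ ∈ PAP₀` then `sup ‖g‖ ≤ sup ‖g + φ‖`; consequently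
the decomposition of a pseudo almost periodic function is unique. -/
theorem stmt7 {X : Type*} [NormedAddCommGroup X]
    (g φ : ℝ → X) (hg : IsBohrAP g) (hφ : IsPAP0Fun φ) :
    (⨆ t : ℝ, ‖g t‖) ≤ (⨆ t : ℝ, ‖g t + φ t‖) ∧
      ∀ g₂ φ₂ : ℝ → X, IsBohrAP g₂ → IsPAP0Fun φ₂ →
        (∀ t, g t + φ t = g₂ t + φ₂ t) → g = g₂ ∧ φ = φ₂ := by
  constructor
  · exact ciSup_le (fun t => key_lemma hg hφ t)
  · intro g₂ φ₂ hg₂ hφ₂ heq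
    have hG : IsBohrAP (fun t => g t - g₂ t) := ap_sub hg hg₂
    have hΦ : IsPAP0Fun (fun t => φ t - φ₂ t) := pap0_sub hφ hφ₂
    have hzero : ∀ t : ℝ, (g t - g₂ t) + (φ t - φ₂ t) = 0 := by
      intro t
      rw [sub_add_sub_comm, heq t, sub_self]
    have hsup : (⨆ s : ℝ, ‖(g s - g₂ s) + (φ s - φ₂ s)‖) = 0 := by
      calc (⨆ s : ℝ, ‖(g s - g₂ s) + (φ s - φ₂ s)‖) = ⨆ _ : ℝ, (0:ℝ) :=
            iSup_congr (fun s => by rw [hzero s, norm_zero])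
        _ = 0 := ciSup_const
    have hgg : ∀ t, g t = g₂ t := by
      intro t
      have hk := key_lemma hG hΦ t
      beta_reduce at hk
      rw [hsup] at hk
      have := norm_le_zero_iff.1 hk
      exact sub_eq_zero.1 this
    refine ⟨funext hgg, funext fun t => ?_⟩
    have := heq t
    rw [hgg t] at this
    exact add_left_cancel this
end
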